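/- Let A be a finite alphabet with |A| ≥ 2, let k ≥ 1, and let n ≥ k. Then λ_{A,σ_k}(n), the largest cardinality of a finite set X of words of length at most n over A over which a σ_k-Gray cycle exists, is given by: λ_{A,σ_k}(n) = |A|^n if |A| ≥ 3 and n ≥ k; λ_{A,σ_k}(n) = 2 if |A| = 2 and n = k; λ_{A,σ_k}(n) = 2^n if |A| = 2, n ≥ k+1 and k is odd; and λ_{A,σ_k}(n) = 2^{n−1} if |A| = 2, n ≥ k+1 and k is even. -/

import Mathlib

/-- Hamming distance between two words (lists) of the same length:
the number of positions in which they differ. -/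
def hammingL {α : Type*} [DecidableEq α] (w w' : List α) : ℕ :=
  ((w.zip w').filter fun q => decide (q.1 ≠ q.2)).length

/-- `w` (restricted to indices `< N`, where `N = |X|`) is a `σ_k`-Gray cycle over the
finite set of words `X`: the terms lie in `X`, enumerate all of `X`, are pairwise
distinct, two consecutive terms have the same length and Hamming distance exactly `k`,
and so do the first and the last term. -/
def IsSigmaGrayCycle {α : Type*} [DecidableEq α] (k N : ℕ) (w : ℕ → List α)
    (X : Finset (List α)) : Prop :=
  N = X.card ∧
  (∀ i, i < N → w i ∈ X) ∧
  (∀ x ∈ X, ∃ i, i < N ∧ w i = x) ∧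
  (∀ i, i < N → ∀ j, j < N → w i = w j → i = j) ∧
  (∀ i, 1 ≤ i → i < N →
    (w (i - 1)).length = (w i).length ∧ hammingL (w (i - 1)) (w i) = k) ∧
  (0 < N → (w (N - 1)).length = (w 0).length ∧ hammingL (w (N - 1)) (w 0) = k)

/-- The set of cardinalities of finite sets `X` of words of length at most `n` over the
alphabet `A` over which some `σ_k`-Gray cycle exists. The largest element of this set
is `λ_{A,σ_k}(n)`. -/
def grayCycleSizes (A : Type*) [DecidableEq A] (k n : ℕ) : Set ℕ :=
  {m : ℕ | ∃ (X : Finset (List A)) (w : ℕ → List A),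
    (∀ x ∈ X, x.length ≤ n) ∧ IsSigmaGrayCycle k X.card w X ∧ m = X.card}


section ham
variable {α β : Type*} [DecidableEq α] [DecidableEq β]

lemma hammingL_le (u v : List α) : hammingL u v ≤ u.length := by
  calc ((u.zip v).filter _).length ≤ (u.zip v).length := List.length_filter_le _ _
  _ ≤ u.length := by rw [List.length_zip]; omega

lemma hammingL_self (u : List α) : hammingL u u = 0 := by
  induction u with
  | nil => rfl
  | cons a l ih => simpa [hammingL, List.zip, List.filter] using ih

lemma hammingL_append {a b c d : List α} (h : a.length = c.length) :
    hammingL (a ++ b) (c ++ d) = hammingL a c + hammingL b d := by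
  unfold hammingL
  rw [List.zip_append h, List.filter_append, List.length_append]

lemma hammingL_map (g : α → β) (hg : Function.Injective g) (u v : List α) :
    hammingL (u.map g) (v.map g) = hammingL u v := by
  unfold hammingL
  rw [List.zip_map]
  rw [List.filter_map, List.length_map]
  congr 1
  apply List.filter_congr
  intro p _
  simp [Prod.map, hg.eq_iff]

lemma hammingL_ofFn {n : ℕ} (f g : Fin n → α) :
    hammingL (List.ofFn f) (List.ofFn g)
      = (Finset.univ.filter fun i => f i ≠ g i).card := by
  unfold hammingL
  rw [List.ofFn_eq_map, List.ofFn_eq_map, List.zip_map']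
  rw [List.filter_map, List.length_map]
  have : (Finset.univ.filter fun i => f i ≠ g i).card
      = ((List.finRange n).filter fun i => decide (f i ≠ g i)).length := by
    rw [Fin.univ_def]
    rfl
  rw [this]
  rfl

end ham

/-- digit-difference ("modular Gray code") function -/
def gdig (q t j : ℕ) : ZMod q := ((t / q^j : ℕ) : ZMod q) - ((t / q^(j+1) : ℕ) : ZMod q)

section gray
variable {q : ℕ} (hq : 2 ≤ q)
include hq

lemma one_ne_zero_zmod : (1 : ZMod q) ≠ 0 := by
  have : Fact (1 < q) := ⟨hq⟩
  exact one_ne_zero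

/-- floor jump: (t+1)/d = t/d or t/d + 1 -/
lemma div_succ_cases (t d : ℕ) : (t+1)/d = t/d ∨ (t+1)/d = t/d + 1 := by
  have h1 : t/d ≤ (t+1)/d := Nat.div_le_div_right (by omega)
  have h2 : (t+1)/d ≤ t/d + 1 := by
    rcases Nat.eq_zero_or_pos d with h | h
    · simp [h]
    · calc (t+1)/d ≤ (t+d)/d := Nat.div_le_div_right (by omega)
      _ = t/d + 1 := by rw [Nat.add_div_right _ h]
  omega

/-- digits determine number -/
lemma digits_inj : ∀ (m s t : ℕ), s < q^m → t < q^m →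
    (∀ j, s / q^j % q = t / q^j % q) → s = t := by
  intro m
  induction m with
  | zero => intro s t hs ht _; simp at hs ht; omega
  | succ m ih =>
    intro s t hs ht h
    have h0 := h 0
    simp at h0
    have hd : s / q = t / q := by
      apply ih (s/q) (t/q)
      · exact Nat.div_lt_of_lt_mul (by rw [← pow_succ']; omega)
      · exact Nat.div_lt_of_lt_mul (by rw [← pow_succ']; omega)
      · intro j
        rw [Nat.div_div_eq_div_mul, Nat.div_div_eq_div_mul, ← pow_succ']
        exact h (j+1)
    have e1 := Nat.div_add_mod s q
    have e2 := Nat.div_add_mod t q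
    rw [hd] at e1
    omega

lemma cast_pow_eq_zero {j : ℕ} (hj : 1 ≤ j) : ((q^j : ℕ) : ZMod q) = 0 := by
  have : (q:ℕ) ∣ q^j := dvd_pow_self q (by omega)
  exact (ZMod.natCast_eq_zero_iff _ _).mpr this

lemma cast_pred_pow {j : ℕ} (hj : 1 ≤ j) : ((q^j - 1 : ℕ) : ZMod q) = -1 := by
  have h1 : 1 ≤ q^j := Nat.one_le_pow _ _ (by omega)
  have := Nat.cast_sub (R := ZMod q) h1
  rw [this, cast_pow_eq_zero hq hj]
  simp

/-- value of digits recoverable from gdig -/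
lemma cast_div_eq_of_gdig {m s t : ℕ} (hs : s < q^m) (ht : t < q^m)
    (h : ∀ j < m, gdig q s j = gdig q t j) :
    ∀ j, ((s / q^j : ℕ) : ZMod q) = ((t / q^j : ℕ) : ZMod q) := by
  have key : ∀ d j, j + d = m → ((s / q^j : ℕ) : ZMod q) = ((t / q^j : ℕ) : ZMod q) := by
    intro d
    induction d with
    | zero =>
      intro j hj
      have hj' : j = m := by omega
      subst hj'
      rw [Nat.div_eq_of_lt hs, Nat.div_eq_of_lt ht]
    | succ d ih =>
      intro j hj
      have h1 := ih (j+1) (by omega)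
      have h2 := h j (by omega)
      unfold gdig at h2
      linear_combination h2 + h1
  intro j
  rcases le_or_gt j m with hj | hj
  · exact key (m - j) j (by omega)
  · have h1 : s / q^j = 0 := Nat.div_eq_of_lt (lt_of_lt_of_le hs (Nat.pow_le_pow_right (by omega) (by omega)))
    have h2 : t / q^j = 0 := Nat.div_eq_of_lt (lt_of_lt_of_le ht (Nat.pow_le_pow_right (by omega) (by omega)))
    rw [h1, h2]

/-- injectivity of the gray digits -/
lemma gray_inj {m s t : ℕ} (hs : s < q^m) (ht : t < q^m)
    (h : ∀ j < m, gdig q s j = gdig q t j) : s = t := by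
  apply digits_inj hq m s t hs ht
  intro j
  have := cast_div_eq_of_gdig hq hs ht h j
  have hv := congrArg ZMod.val this
  rwa [ZMod.val_natCast, ZMod.val_natCast] at hv

end gray

section gray2
variable {q : ℕ} (hq : 2 ≤ q)

include hq

lemma gdig_eq_zero_of_ge {m t j : ℕ} (ht : t < q^m) (hj : m ≤ j) : gdig q t j = 0 := by
  have h1 : t / q^j = 0 :=
    Nat.div_eq_of_lt (lt_of_lt_of_le ht (Nat.pow_le_pow_right (by omega) hj))
  have h2 : t / q^(j+1) = 0 :=
    Nat.div_eq_of_lt (lt_of_lt_of_le ht (Nat.pow_le_pow_right (by omega) (by omega)))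
  unfold gdig
  rw [h1, h2]
  simp
lemma pred_pow_div {m j : ℕ} (hj : j ≤ m) : (q^m - 1) / q^j = q^(m-j) - 1 := by
  have ha : 0 < q^j := Nat.pow_pos (by omega)
  have hb : 0 < q^(m-j) := Nat.pow_pos (by omega)
  have key : q^j * (q^(m-j) - 1) + q^j = q^m := by
    obtain ⟨b, hbe⟩ : ∃ b, q^(m-j) = b + 1 := ⟨q^(m-j) - 1, by omega⟩
    have h4 : q^j * q^(m-j) = q^m := by rw [← pow_add]; congr 1; omega
    rw [hbe] at h4
    have h5 : q^j * (b + 1) = q^j * b + q^j := by ring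
    rw [hbe]
    simp only [Nat.add_sub_cancel]
    omega
  have key2 : (q^(m-j) - 1) * q^j + q^j = q^m := by rw [mul_comm]; exact key
  have key3 : (q^(m-j) - 1 + 1) * q^j = q^m := by rw [add_mul, one_mul]; omega
  apply Nat.div_eq_of_lt_le <;> omega

lemma delta_conclusion {m : ℕ} (δ : ℕ → ZMod q) (h0 : δ 0 = 1)
    (h01 : ∀ j, δ j = 0 ∨ δ j = 1) (hprop : ∀ j, δ j = 0 → δ (j+1) = 0)
    (hm : δ m = 0) :
    ∃ J < m, ∀ j < m, (δ j ≠ δ (j+1) ↔ j = J) := by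
  have hone : (1 : ZMod q) ≠ 0 := one_ne_zero_zmod hq
  have hex : ∃ j, δ j = 0 := ⟨m, hm⟩
  set J' := Nat.find hex with hJ'
  have hJ'z : δ J' = 0 := Nat.find_spec hex
  have hJ'pos : 0 < J' := by
    rcases Nat.eq_zero_or_pos J' with h | h
    · rw [h] at hJ'z; rw [h0] at hJ'z; exact absurd hJ'z hone
    · exact h
  have hJ'le : J' ≤ m := Nat.find_min' hex hm
  have hup : ∀ j, J' ≤ j → δ j = 0 := by
    intro j hj
    induction j, hj using Nat.le_induction with
    | base => exact hJ'z
    | succ j hj ih => exact hprop j ih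
  have hlow : ∀ j, j < J' → δ j = 1 := fun j hj =>
    (h01 j).resolve_left (Nat.find_min hex hj)
  refine ⟨J' - 1, by omega, ?_⟩
  intro j hjm
  constructor
  · intro hne
    by_contra hjj
    rcases lt_or_ge j (J' - 1) with h | h
    · rw [hlow j (by omega), hlow (j+1) (by omega)] at hne
      exact hne rfl
    · have hj' : J' ≤ j := by omega
      rw [hup j hj', hup (j+1) (by omega)] at hne
      exact hne rfl
  · intro hje
    subst hje
    rw [hlow (J'-1) (by omega), hup (J'-1+1) (by omega)]
    exact hone

lemma gray_step {m t : ℕ} (hm : 1 ≤ m) (ht : t < q^m) :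
    ∃ J < m, ∀ j < m,
      (gdig q ((t+1) % q^m) j ≠ gdig q t j ↔ j = J) := by
  set t1 := (t+1) % q^m with ht1
  set δ : ℕ → ZMod q := fun j => ((t1 / q^j : ℕ) : ZMod q) - ((t / q^j : ℕ) : ZMod q) with hδ
  have hone : (1 : ZMod q) ≠ 0 := one_ne_zero_zmod hq
  have hqpos : 0 < q := by omega
  have hdiv0 : ∀ s j, s < q^m → m ≤ j → s / q^j = 0 := fun s j hs hj =>
    Nat.div_eq_of_lt (lt_of_lt_of_le hs (Nat.pow_le_pow_right (by omega) hj))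
  have hfacts : δ 0 = 1 ∧ (∀ j, δ j = 0 ∨ δ j = 1) ∧ (∀ j, δ j = 0 → δ (j+1) = 0) ∧ δ m = 0 := by
    by_cases hc : t + 1 < q^m
    · have ht1e : t1 = t + 1 := Nat.mod_eq_of_lt hc
      have hjump : ∀ j, t1/q^j = t/q^j ∨ t1/q^j = t/q^j + 1 := by
        intro j; rw [ht1e]; exact div_succ_cases hq t (q^j)
      refine ⟨?_, ?_, ?_, ?_⟩
      · simp only [hδ, pow_zero, Nat.div_one, ht1e]
        push_cast
        ring
      · intro j
        rcases hjump j with h | h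
        · left; simp only [hδ, h, sub_self]
        · right; simp only [hδ, h]; push_cast; ring
      · intro j hz
        have hsame : t1/q^j = t/q^j := by
          rcases hjump j with h | h
          · exact h
          · exfalso
            apply hone
            rw [← hz]
            simp only [hδ, h]
            push_cast
            ring
        have : t1/q^(j+1) = t/q^(j+1) := by
          rw [pow_succ, ← Nat.div_div_eq_div_mul, ← Nat.div_div_eq_div_mul, hsame]
        simp only [hδ, this, sub_self]
      · have h1 : t1 / q^m = 0 := hdiv0 t1 m (Nat.mod_lt _ (Nat.pow_pos hqpos)) le_rfl
        have h2 : t / q^m = 0 := hdiv0 t m ht le_rfl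
        simp only [hδ, h1, h2, sub_self]
    · have hteq : t = q^m - 1 := by
        have := Nat.one_le_pow m q hqpos
        omega
      have ht1e : t1 = 0 := by
        have : t + 1 = q^m := by
          have := Nat.one_le_pow m q hqpos
          omega
        rw [ht1, this, Nat.mod_self]
      have hlt : ∀ j, j < m → δ j = 1 := by
        intro j hj
        have hdt : t / q^j = q^(m-j) - 1 := by rw [hteq]; exact pred_pow_div hq (by omega)
        simp only [hδ, ht1e, Nat.zero_div, Nat.cast_zero, hdt]
        rw [cast_pred_pow hq (by omega)]
        ring
      have hge : ∀ j, m ≤ j → δ j = 0 := by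
        intro j hj
        have h1 : t1 / q^j = 0 := by rw [ht1e]; exact Nat.zero_div _
        have h2 : t / q^j = 0 := hdiv0 t j ht hj
        simp only [hδ, h1, h2, sub_self]
      refine ⟨hlt 0 (by omega), ?_, ?_, hge m le_rfl⟩
      · intro j
        rcases lt_or_ge j m with h | h
        · right; exact hlt j h
        · left; exact hge j h
      · intro j hz
        rcases lt_or_ge j m with h | h
        · exfalso; rw [hlt j h] at hz; exact hone hz
        · exact hge (j+1) (by omega)
  obtain ⟨h0, h01, hprop, hmz⟩ := hfacts
  obtain ⟨J, hJm, hJ⟩ := delta_conclusion hq δ h0 h01 hprop hmz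
  refine ⟨J, hJm, ?_⟩
  intro j hj
  rw [← hJ j hj]
  have hdiff : gdig q t1 j - gdig q t j = δ j - δ (j+1) := by
    simp only [hδ, gdig]
    ring
  constructor
  · intro h
    intro heq
    apply h
    have : gdig q t1 j - gdig q t j = 0 := by rw [hdiff, heq, sub_self]
    have := sub_eq_zero.mp this
    exact this
  · intro h
    intro heq
    apply h
    have : δ j - δ (j+1) = 0 := by rw [← hdiff, heq, sub_self]
    exact sub_eq_zero.mp this

end gray2

section glue
variable {A : Type*} [DecidableEq A] {k n : ℕ}

lemma mem_gray (N : ℕ) (hN : 0 < N) (w : ℕ → List A)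
    (hlen : ∀ t, t < N → (w t).length ≤ n)
    (hinj : ∀ s, s < N → ∀ t, t < N → w s = w t → s = t)
    (hstep : ∀ t, t < N → (w t).length = (w ((t+1) % N)).length
      ∧ hammingL (w t) (w ((t+1) % N)) = k) :
    N ∈ grayCycleSizes A k n := by
  have hinj' : Set.InjOn w (Finset.range N) := by
    intro s hs t ht h
    exact hinj s (Finset.mem_range.mp hs) t (Finset.mem_range.mp ht) h
  have hcard : ((Finset.range N).image w).card = N := by
    rw [Finset.card_image_of_injOn hinj', Finset.card_range]
  refine ⟨(Finset.range N).image w, w, ?_, ?_, hcard.symm⟩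
  · intro x hx
    obtain ⟨i, hi, rfl⟩ := Finset.mem_image.mp hx
    exact hlen i (Finset.mem_range.mp hi)
  · rw [IsSigmaGrayCycle, hcard]
    refine ⟨rfl, ?_, ?_, ?_, ?_, ?_⟩
    · intro i hi
      exact Finset.mem_image.mpr ⟨i, Finset.mem_range.mpr hi, rfl⟩
    · intro x hx
      obtain ⟨i, hi, rfl⟩ := Finset.mem_image.mp hx
      exact ⟨i, Finset.mem_range.mp hi, rfl⟩
    · exact hinj
    · intro i h1 hi
      have := hstep (i-1) (by omega)
      have he : (i - 1 + 1) % N = i := by rw [Nat.sub_add_cancel h1, Nat.mod_eq_of_lt hi]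
      rw [he] at this
      exact this
    · intro _
      have := hstep (N-1) (by omega)
      have he : (N - 1 + 1) % N = 0 := by rw [Nat.sub_add_cancel hN, Nat.mod_self]
      rw [he] at this
      exact this

lemma mem_two (hk : 1 ≤ k) (hkn : k ≤ n) {a b : A} (hab : a ≠ b) :
    2 ∈ grayCycleSizes A k n := by
  apply mem_gray 2 (by norm_num) (fun t => List.ofFn fun _ : Fin k => if t % 2 = 0 then a else b)
  · intro t _
    simp
    omega
  · intro s hs t ht h
    rw [List.ofFn_inj] at h
    have := congrFun h ⟨0, hk⟩
    by_contra hne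
    interval_cases s <;> interval_cases t <;> simp_all
  · intro t ht
    constructor
    · simp
    · rw [hammingL_ofFn]
      have hpar : ∀ i : Fin k,
          (if t % 2 = 0 then a else b) ≠ (if (t+1) % 2 % 2 = 0 then a else b) := by
        intro i
        rcases Nat.even_or_odd t with h | h
        · have h1 : t % 2 = 0 := Nat.even_iff.mp h
          have h2 : (t+1) % 2 % 2 = 1 := by omega
          simp [h1, h2, hab]
        · have h1 : t % 2 = 1 := Nat.odd_iff.mp h
          have h2 : (t+1) % 2 % 2 = 0 := by omega
          simp [h1, h2, hab.symm]
      rw [Finset.filter_true_of_mem (fun i _ => hpar i)]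
      simp

end glue

lemma cast_mod_pow_eq {q : ℕ} (hq : 2 ≤ q) {e x : ℕ} (he : 1 ≤ e) :
    ((x % q^e : ℕ) : ZMod q) = (x : ZMod q) := by
  conv_rhs => rw [← Nat.div_add_mod x (q^e)]
  rw [Nat.cast_add, Nat.cast_mul, cast_pow_eq_zero hq he, zero_mul, zero_add]

-- construction for q ≥ 3
def wA (q k n t : ℕ) : List (ZMod q) :=
  (List.ofFn fun i : Fin (k-1) => ((t / q^(n-k+1+i.1) : ℕ) : ZMod q) + (t : ZMod q))
  ++ (List.ofFn fun j : Fin (n-k+1) => gdig q (t % q^(n-k+1)) j.1)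

section constA
variable {q k n : ℕ} (hq : 2 ≤ q) (hk : 1 ≤ k) (hkn : k ≤ n)
include hq hk hkn

omit hq in
lemma wA_length (t : ℕ) : (wA q k n t).length = n := by
  simp [wA]
  omega

lemma wA_inj {s t : ℕ} (hs : s < q^n) (ht : t < q^n) (h : wA q k n s = wA q k n t) : s = t := by
  set m := n - k + 1 with hm
  have hm1 : 1 ≤ m := by omega
  have hn1 : 1 ≤ n := by omega
  have hqpow : 0 < q^m := Nat.pow_pos (by omega)
  -- split the append
  have hsplit := List.append_inj h (by simp)
  obtain ⟨h1, h2⟩ := hsplit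
  rw [List.ofFn_inj] at h1 h2
  -- second block gives s % q^m = t % q^m
  have hsm : s % q^m = t % q^m := by
    apply gray_inj hq (Nat.mod_lt _ hqpow) (Nat.mod_lt _ hqpow)
    intro j hj
    exact congrFun h2 ⟨j, hj⟩
  -- casts of s and t agree
  have hcast : (s : ZMod q) = (t : ZMod q) := by
    rw [← cast_mod_pow_eq hq (x := s) hm1, ← cast_mod_pow_eq hq (x := t) hm1, hsm]
  -- pages
  have hpage : s / q^m = t / q^m := by
    have hps : s / q^m < q^(k-1) := by
      apply Nat.div_lt_of_lt_mul
      rw [← pow_add]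
      have hmn : m + (k - 1) = n := by omega
      rw [hmn]
      exact hs
    have hpt : t / q^m < q^(k-1) := by
      apply Nat.div_lt_of_lt_mul
      rw [← pow_add]
      have hmn : m + (k - 1) = n := by omega
      rw [hmn]
      exact ht
    apply digits_inj hq (k-1) _ _ hps hpt
    intro j
    rcases lt_or_ge j (k-1) with hj | hj
    · have hcc : ((s / q^m / q^j : ℕ) : ZMod q) = ((t / q^m / q^j : ℕ) : ZMod q) := by
        have := congrFun h1 ⟨j, hj⟩
        simp only at this
        have hdd : ∀ x : ℕ, x / q^m / q^j = x / q^(m+j) := by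
          intro x
          rw [Nat.div_div_eq_div_mul, ← pow_add]
        rw [hdd, hdd]
        have heq : ((s / q^(m+j) : ℕ) : ZMod q) + (s : ZMod q)
            = ((t / q^(m+j) : ℕ) : ZMod q) + (t : ZMod q) := this
        rw [hcast] at heq
        exact add_right_cancel heq
      have hv := congrArg ZMod.val hcc
      rwa [ZMod.val_natCast, ZMod.val_natCast] at hv
    · have hz : ∀ x : ℕ, x < q^(k-1) → x / q^j = 0 := by
        intro x hx
        exact Nat.div_eq_of_lt (lt_of_lt_of_le hx (Nat.pow_le_pow_right (by omega) hj))
      rw [hz _ hps, hz _ hpt]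
  have es := Nat.div_add_mod s (q^m)
  have et := Nat.div_add_mod t (q^m)
  rw [hpage, hsm] at es
  omega

lemma wA_step (hq3 : 3 ≤ q) {t : ℕ} (ht : t < q^n) :
    hammingL (wA q k n t) (wA q k n ((t+1) % q^n)) = k := by
  set m := n - k + 1 with hm
  have hm1 : 1 ≤ m := by omega
  have hn1 : 1 ≤ n := by omega
  set t1 := (t+1) % q^n with ht1def
  have ht1 : t1 < q^n := Nat.mod_lt _ (Nat.pow_pos (by omega))
  rw [wA, wA, hammingL_append (by simp)]
  -- cast t1 = cast t + 1
  have hc1 : (t1 : ZMod q) = (t : ZMod q) + 1 := by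
    rw [ht1def, cast_mod_pow_eq hq hn1]
    push_cast
    ring
  -- first block: all coordinates differ
  have hblock1 : hammingL
      (List.ofFn fun i : Fin (k-1) => ((t / q^(n-k+1+i.1) : ℕ) : ZMod q) + (t : ZMod q))
      (List.ofFn fun i : Fin (k-1) => ((t1 / q^(n-k+1+i.1) : ℕ) : ZMod q) + (t1 : ZMod q)) = k - 1 := by
    rw [hammingL_ofFn]
    have hall : ∀ i : Fin (k-1),
        ((t / q^(n-k+1+i.1) : ℕ) : ZMod q) + (t : ZMod q)
        ≠ ((t1 / q^(n-k+1+i.1) : ℕ) : ZMod q) + (t1 : ZMod q) := by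
      intro i
      set r := n - k + 1 + i.1 with hr
      have hrn : r < n := by have := i.2; omega
      have hjump : ((t1 / q^r : ℕ) : ZMod q) - ((t / q^r : ℕ) : ZMod q) = 0
          ∨ ((t1 / q^r : ℕ) : ZMod q) - ((t / q^r : ℕ) : ZMod q) = 1 := by
        by_cases hc : t + 1 < q^n
        · have ht1e : t1 = t + 1 := Nat.mod_eq_of_lt hc
          rcases div_succ_cases hq t (q^r) with h | h
          · left; rw [ht1e, h, sub_self]
          · right; rw [ht1e, h]; push_cast; ring
        · have hteq : t = q^n - 1 := by
            have := Nat.one_le_pow n q (by omega)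
            omega
          have ht1e : t1 = 0 := by
            have h2 : t + 1 = q^n := by
              have := Nat.one_le_pow n q (by omega)
              omega
            rw [ht1def, h2, Nat.mod_self]
          right
          rw [ht1e, hteq, Nat.zero_div, pred_pow_div hq (le_of_lt hrn),
            cast_pred_pow hq (by omega)]
          push_cast
          ring
      intro heq
      have hd : ((t1 / q^r : ℕ) : ZMod q) - ((t / q^r : ℕ) : ZMod q) + ((t1 : ZMod q) - (t : ZMod q)) = 0 := by
        linear_combination -heq
      rw [hc1] at hd
      have h2ne : (2 : ZMod q) ≠ 0 := by
        have : ((2:ℕ) : ZMod q) ≠ 0 := by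
          rw [Ne, ZMod.natCast_eq_zero_iff]
          exact fun hdvd => absurd (Nat.le_of_dvd (by norm_num) hdvd) (by omega)
        simpa using this
      have h1ne : (1 : ZMod q) ≠ 0 := by
        have : Fact (1 < q) := ⟨by omega⟩
        exact one_ne_zero
      rcases hjump with h | h
      · rw [h] at hd
        apply h1ne
        linear_combination hd
      · rw [h] at hd
        apply h2ne
        linear_combination hd
    rw [Finset.filter_true_of_mem (by intro i _; exact hall i)]
    simp
  have hkey : t1 % q^(n-k+1) = (t % q^(n-k+1) + 1) % q^(n-k+1) := by
    have hd : q^(n-k+1) ∣ q^n := pow_dvd_pow q (by omega)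
    have h1 : 1 % q^(n-k+1) = 1 := Nat.mod_eq_of_lt (Nat.one_lt_pow (by omega) (by omega))
    rw [ht1def, Nat.mod_mod_of_dvd _ hd, Nat.add_mod, h1]
  have hblock2 : hammingL
      (List.ofFn fun j : Fin (n-k+1) => gdig q (t % q^(n-k+1)) j.1)
      (List.ofFn fun j : Fin (n-k+1) => gdig q (t1 % q^(n-k+1)) j.1) = 1 := by
    rw [hammingL_ofFn]
    obtain ⟨J, hJ, hiff⟩ := gray_step hq hm1 (Nat.mod_lt t (Nat.pow_pos (by omega)))
    have hfil : (Finset.univ.filter fun j : Fin (n-k+1) =>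
        gdig q (t % q^(n-k+1)) j.1 ≠ gdig q (t1 % q^(n-k+1)) j.1) = {⟨J, hJ⟩} := by
      ext i
      simp only [Finset.mem_filter, Finset.mem_univ, true_and, Finset.mem_singleton]
      rw [hkey, ne_comm]
      rw [hiff i.1 i.2]
      exact ⟨fun h => Fin.ext h, fun h => by rw [h]⟩
    rw [hfil, Finset.card_singleton]
  rw [hblock1, hblock2]
  omega

end constA

-- helpers
lemma zmod2_ne_iff : ∀ a b : ZMod 2, a ≠ b ↔ a = b + 1 := by decide
lemma zmod2_add_ne : ∀ a d : ZMod 2, (a ≠ a + d) ↔ d ≠ 0 := by decide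

lemma card_filter_valne {r c : ℕ} (hc : c < r) :
    (Finset.univ.filter fun i : Fin r => i.1 ≠ c).card = r - 1 := by
  have h : (Finset.univ.filter fun i : Fin r => i.1 ≠ c) = Finset.univ.erase ⟨c, hc⟩ := by
    ext i
    simp [Fin.ext_iff]
  rw [h, Finset.card_erase_of_mem (Finset.mem_univ _), Finset.card_univ, Fintype.card_fin]

lemma card_filter_valeq {r c : ℕ} (hc : c < r) :
    (Finset.univ.filter fun i : Fin r => i.1 = c).card = 1 := by
  have h : (Finset.univ.filter fun i : Fin r => i.1 = c) = {⟨c, hc⟩} := by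
    ext i
    simp [Fin.ext_iff]
  rw [h, Finset.card_singleton]

/-- partial sums of the gray digits -/
def Sg (k t : ℕ) : ZMod 2 := ∑ j ∈ Finset.range (k+1), gdig 2 t j
def Tg (k n t : ℕ) : ZMod 2 := ∑ j ∈ Finset.Ico (k+1) n, gdig 2 t j

/-- the word sequence for the binary odd-k case -/
def wC (k n t : ℕ) : List (ZMod 2) :=
  (List.ofFn fun i : Fin (k-1) => Sg k t + Tg k n t - gdig 2 t i.1)
  ++ ((List.ofFn fun i : Fin 2 => Sg k t - gdig 2 t (k-1+i.1))
  ++ (List.ofFn fun i : Fin (n-k-1) => gdig 2 t (k+1+i.1)))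

section constC
variable {k n : ℕ} (hk : 1 ≤ k) (hko : Odd k) (hkn : k+1 ≤ n)
include hk hko hkn

omit hko in
lemma wC_length (t : ℕ) : (wC k n t).length = n := by
  simp [wC]
  omega

lemma k_smul_zmod2 (x : ZMod 2) : k • x = x := by
  rw [nsmul_eq_mul]
  have h1 : ((k : ℕ) : ZMod 2) = ((k % 2 : ℕ) : ZMod 2) := (ZMod.natCast_mod k 2).symm
  rw [h1, Nat.odd_iff.mp hko]
  simp

lemma wC_inj {s t : ℕ} (hs : s < 2^n) (ht : t < 2^n) (h : wC k n s = wC k n t) : s = t := by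
  obtain ⟨h1, h23⟩ := List.append_inj h (by simp)
  obtain ⟨h2, h3⟩ := List.append_inj h23 (by simp)
  rw [List.ofFn_inj] at h1 h2 h3
  have hgh : ∀ j, k+1 ≤ j → j < n → gdig 2 s j = gdig 2 t j := by
    intro j hj1 hj2
    have := congrFun h3 ⟨j - (k+1), by omega⟩
    simp only at this
    have he : k + 1 + (j - (k+1)) = j := by omega
    rwa [he] at this
  have hT : Tg k n s = Tg k n t := by
    apply Finset.sum_congr rfl
    intro j hj
    rw [Finset.mem_Ico] at hj
    exact hgh j hj.1 hj.2
  have hSg : ∀ i, i < k+1 → Sg k s - gdig 2 s i = Sg k t - gdig 2 t i := by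
    intro i hi
    rcases lt_or_ge i (k-1) with h | h
    · have := congrFun h1 ⟨i, h⟩
      simp only at this
      linear_combination this - hT
    · have := congrFun h2 ⟨i - (k-1), by omega⟩
      simp only at this
      have he : k - 1 + (i - (k-1)) = i := by omega
      rwa [he] at this
  have hsum : ∑ i ∈ Finset.range (k+1), (Sg k s - gdig 2 s i)
      = ∑ i ∈ Finset.range (k+1), (Sg k t - gdig 2 t i) := by
    apply Finset.sum_congr rfl
    intro i hi
    exact hSg i (Finset.mem_range.mp hi)
  have hred : ∀ u : ℕ, ∑ i ∈ Finset.range (k+1), (Sg k u - gdig 2 u i) = Sg k u := by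
    intro u
    rw [Finset.sum_sub_distrib, Finset.sum_const, Finset.card_range]
    have : ∑ i ∈ Finset.range (k+1), gdig 2 u i = Sg k u := rfl
    rw [this, succ_nsmul, k_smul_zmod2 hk hko hkn]
    ring
  rw [hred, hred] at hsum
  have hglow : ∀ j, j < k+1 → gdig 2 s j = gdig 2 t j := by
    intro j hj
    have := hSg j hj
    rw [hsum] at this
    linear_combination -this
  apply gray_inj (q := 2) (by norm_num) hs ht
  intro j hj
  rcases lt_or_ge j (k+1) with h | h
  · exact hglow j h
  · exact hgh j h hj

lemma wC_step {t : ℕ} (ht : t < 2^n) :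
    hammingL (wC k n t) (wC k n ((t+1) % 2^n)) = k := by
  set t1 := (t+1) % 2^n with ht1def
  have ht1 : t1 < 2^n := Nat.mod_lt _ (by positivity)
  obtain ⟨J, hJn, hiff⟩ := gray_step (q := 2) (by norm_num) (m := n) (by omega) ht
  have hval : ∀ j, gdig 2 t1 j = gdig 2 t j + (if j = J then 1 else 0) := by
    intro j
    rcases lt_or_ge j n with hjn | hjn
    · by_cases hjJ : j = J
      · subst hjJ
        simp only [if_pos rfl]
        exact (zmod2_ne_iff _ _).mp ((hiff j hjn).mpr rfl)
      · simp only [if_neg hjJ, add_zero]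
        by_contra hne
        exact hjJ ((hiff j hjn).mp hne)
    · have hz1 : gdig 2 t1 j = 0 := gdig_eq_zero_of_ge (by norm_num) ht1 hjn
      have hz2 : gdig 2 t j = 0 := gdig_eq_zero_of_ge (by norm_num) ht hjn
      have hjJ : j ≠ J := by omega
      simp [hz1, hz2, hjJ]
  have hS1 : Sg k t1 = Sg k t + (if J < k+1 then 1 else 0) := by
    unfold Sg
    rw [Finset.sum_congr rfl (fun j _ => hval j), Finset.sum_add_distrib,
      Finset.sum_ite_eq' (Finset.range (k+1)) J (fun _ => (1 : ZMod 2))]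
    simp [Finset.mem_range]
  have hT1 : Tg k n t1 = Tg k n t + (if k+1 ≤ J then 1 else 0) := by
    unfold Tg
    rw [Finset.sum_congr rfl (fun j _ => hval j), Finset.sum_add_distrib,
      Finset.sum_ite_eq' (Finset.Ico (k+1) n) J (fun _ => (1 : ZMod 2))]
    congr 1
    simp [Finset.mem_Ico, hJn]
  rw [wC, wC, hammingL_append (by simp), hammingL_append (by simp), hammingL_ofFn,
    hammingL_ofFn, hammingL_ofFn]
  have e1 : ∀ i : Fin (k-1),
      Sg k t1 + Tg k n t1 - gdig 2 t1 i.1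
      = (Sg k t + Tg k n t - gdig 2 t i.1)
        + ((if J < k+1 then 1 else 0) + (if k+1 ≤ J then 1 else 0)
          - (if i.1 = J then 1 else 0)) := by
    intro i
    rw [hS1, hT1, hval i.1]
    ring
  have e2 : ∀ i : Fin 2,
      Sg k t1 - gdig 2 t1 (k-1+i.1)
      = (Sg k t - gdig 2 t (k-1+i.1))
        + ((if J < k+1 then 1 else 0) - (if k-1+i.1 = J then 1 else 0)) := by
    intro i
    rw [hS1, hval (k-1+i.1)]
    ring
  have e3 : ∀ i : Fin (n-k-1),
      gdig 2 t1 (k+1+i.1) = gdig 2 t (k+1+i.1) + (if k+1+i.1 = J then 1 else 0) := by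
    intro i
    rw [hval (k+1+i.1)]
  rcases lt_or_ge J (k-1) with hc | hc
  · -- J < k-1
    have hJk : J < k + 1 := by omega
    have hJk2 : ¬ (k+1 ≤ J) := by omega
    have c1 : (Finset.univ.filter fun i : Fin (k-1) =>
        Sg k t + Tg k n t - gdig 2 t i.1 ≠ Sg k t1 + Tg k n t1 - gdig 2 t1 i.1).card = k - 2 := by
      have hp : ∀ i : Fin (k-1),
          (Sg k t + Tg k n t - gdig 2 t i.1 ≠ Sg k t1 + Tg k n t1 - gdig 2 t1 i.1) ↔ i.1 ≠ J := by
        intro i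
        rw [e1 i, zmod2_add_ne, if_pos hJk, if_neg hJk2]
        by_cases hiJ : i.1 = J
        · rw [if_pos hiJ]
          simp [hiJ]
        · rw [if_neg hiJ]
          simp [hiJ]
      rw [Finset.filter_congr (fun i _ => by rw [hp i]), card_filter_valne (by omega)]
      omega
    have c2 : (Finset.univ.filter fun i : Fin 2 =>
        Sg k t - gdig 2 t (k-1+i.1) ≠ Sg k t1 - gdig 2 t1 (k-1+i.1)).card = 2 := by
      rw [Finset.filter_true_of_mem]
      · simp
      · intro i _
        rw [e2 i, zmod2_add_ne, if_pos hJk, if_neg (by omega)]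
        decide
    have c3 : (Finset.univ.filter fun i : Fin (n-k-1) =>
        gdig 2 t (k+1+i.1) ≠ gdig 2 t1 (k+1+i.1)).card = 0 := by
      rw [Finset.filter_false_of_mem]
      · simp
      · intro i _
        rw [e3 i, if_neg (by omega)]
        simp
    rw [c1, c2, c3]
    omega
  rcases lt_or_ge J (k+1) with hc2 | hc2
  · -- k-1 ≤ J < k+1
    have c1 : (Finset.univ.filter fun i : Fin (k-1) =>
        Sg k t + Tg k n t - gdig 2 t i.1 ≠ Sg k t1 + Tg k n t1 - gdig 2 t1 i.1).card = k - 1 := by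
      rw [Finset.filter_true_of_mem]
      · simp
      · intro i _
        rw [e1 i, zmod2_add_ne, if_pos hc2, if_neg (by omega), if_neg (by have := i.2; omega)]
        decide
    have c2 : (Finset.univ.filter fun i : Fin 2 =>
        Sg k t - gdig 2 t (k-1+i.1) ≠ Sg k t1 - gdig 2 t1 (k-1+i.1)).card = 1 := by
      have hp : ∀ i : Fin 2,
          (Sg k t - gdig 2 t (k-1+i.1) ≠ Sg k t1 - gdig 2 t1 (k-1+i.1)) ↔ i.1 ≠ J - (k-1) := by
        intro i
        rw [e2 i, zmod2_add_ne, if_pos hc2]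
        by_cases hiJ : k-1+i.1 = J
        · rw [if_pos hiJ]
          have : i.1 = J - (k-1) := by omega
          simp [this]
        · rw [if_neg hiJ]
          have : i.1 ≠ J - (k-1) := by omega
          simp [this]
      rw [Finset.filter_congr (fun i _ => by rw [hp i]), card_filter_valne (by omega)]
    have c3 : (Finset.univ.filter fun i : Fin (n-k-1) =>
        gdig 2 t (k+1+i.1) ≠ gdig 2 t1 (k+1+i.1)).card = 0 := by
      rw [Finset.filter_false_of_mem]
      · simp
      · intro i _
        rw [e3 i, if_neg (by omega)]
        simp
    rw [c1, c2, c3]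
    omega
  · -- k+1 ≤ J
    have c1 : (Finset.univ.filter fun i : Fin (k-1) =>
        Sg k t + Tg k n t - gdig 2 t i.1 ≠ Sg k t1 + Tg k n t1 - gdig 2 t1 i.1).card = k - 1 := by
      rw [Finset.filter_true_of_mem]
      · simp
      · intro i _
        rw [e1 i, zmod2_add_ne, if_neg (by omega), if_pos hc2, if_neg (by have := i.2; omega)]
        decide
    have c2 : (Finset.univ.filter fun i : Fin 2 =>
        Sg k t - gdig 2 t (k-1+i.1) ≠ Sg k t1 - gdig 2 t1 (k-1+i.1)).card = 0 := by
      rw [Finset.filter_false_of_mem]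
      · simp
      · intro i _
        rw [e2 i, if_neg (by omega), if_neg (by have := i.2; omega)]
        simp
    have c3 : (Finset.univ.filter fun i : Fin (n-k-1) =>
        gdig 2 t (k+1+i.1) ≠ gdig 2 t1 (k+1+i.1)).card = 1 := by
      have hp : ∀ i : Fin (n-k-1),
          (gdig 2 t (k+1+i.1) ≠ gdig 2 t1 (k+1+i.1)) ↔ i.1 = J - (k+1) := by
        intro i
        rw [e3 i]
        by_cases hiJ : k+1+i.1 = J
        · rw [if_pos hiJ]
          have : i.1 = J - (k+1) := by omega
          simp [this]
        · rw [if_neg hiJ]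
          have : i.1 ≠ J - (k+1) := by omega
          simp [this]
      rw [Finset.filter_congr (fun i _ => by rw [hp i]), card_filter_valeq (by omega)]
    rw [c1, c2, c3]
    omega

end constC

lemma hammingL_singleton {α : Type*} [DecidableEq α] {a b : α} (h : a ≠ b) :
    hammingL [a] [b] = 1 := by
  simp [hammingL, List.filter, h]

section memb
variable {A : Type*} [Fintype A] [DecidableEq A] {k n : ℕ}

lemma memA (hq3 : 3 ≤ Fintype.card A) (hk : 1 ≤ k) (hkn : k ≤ n) :
    Fintype.card A ^ n ∈ grayCycleSizes A k n := by
  set q := Fintype.card A with hq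
  have hq2 : 2 ≤ q := by omega
  haveI : NeZero q := ⟨by omega⟩
  obtain e := (Fintype.equivOfCardEq (α := ZMod q) (β := A) (by rw [ZMod.card]))
  have hqn : 0 < q^n := Nat.pow_pos (by omega)
  apply mem_gray (q^n) hqn (fun t => (wA q k n t).map e)
  · intro t _
    simp [wA_length hk hkn]
  · intro s hs t ht h
    exact wA_inj hq2 hk hkn hs ht (List.map_injective_iff.mpr e.injective h)
  · intro t ht
    constructor
    · simp [wA_length hk hkn]
    · rw [hammingL_map e e.injective]
      exact wA_step hq2 hk hkn hq3 (by omega)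

lemma memC (h2 : Fintype.card A = 2) (hk : 1 ≤ k) (hko : Odd k) (hkn : k+1 ≤ n) :
    2 ^ n ∈ grayCycleSizes A k n := by
  obtain e := (Fintype.equivOfCardEq (α := ZMod 2) (β := A) (by rw [ZMod.card, h2]))
  have hqn : 0 < 2^n := Nat.pow_pos (by omega)
  apply mem_gray (2^n) hqn (fun t => (wC k n t).map e)
  · intro t _
    simp [wC_length hk hkn]
  · intro s hs t ht h
    exact wC_inj hk hko hkn hs ht (List.map_injective_iff.mpr e.injective h)
  · intro t ht
    constructor
    · simp [wC_length hk hkn]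
    · rw [hammingL_map e e.injective]
      exact wC_step hk hko hkn (by omega)

lemma memD (h2 : Fintype.card A = 2) (hk : 1 ≤ k) (hke : Even k) (hkn : k+1 ≤ n) :
    2 ^ (n-1) ∈ grayCycleSizes A k n := by
  obtain e := (Fintype.equivOfCardEq (α := ZMod 2) (β := A) (by rw [ZMod.card, h2]))
  have hk2 : 2 ≤ k := by
    rcases hke with ⟨c, hc⟩
    omega
  have hk1 : 1 ≤ k - 1 := by omega
  have hko : Odd (k-1) := by
    rw [Nat.odd_iff]
    rw [Nat.even_iff] at hke
    omega
  have hkn1 : (k-1)+1 ≤ n-1 := by omega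
  have hn1 : 1 ≤ n - 1 := by omega
  have hqn : 0 < 2^(n-1) := Nat.pow_pos (by omega)
  apply mem_gray (2^(n-1)) hqn
    (fun t => ((wC (k-1) (n-1) t) ++ [((t : ℕ) : ZMod 2)]).map e)
  · intro t _
    simp [wC_length hk1 hkn1]
    omega
  · intro s hs t ht h
    have h' := List.map_injective_iff.mpr e.injective h
    obtain ⟨h1, _⟩ := List.append_inj h'
      (by rw [wC_length hk1 hkn1, wC_length hk1 hkn1])
    exact wC_inj hk1 hko hkn1 hs ht h1
  · intro t ht
    set t1 := (t+1) % 2^(n-1) with ht1def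
    constructor
    · simp [wC_length hk1 hkn1]
    · rw [List.map_append, List.map_append,
        hammingL_append (by simp [wC_length hk1 hkn1]),
        hammingL_map e e.injective, wC_step hk1 hko hkn1 (by omega)]
      have hne : ((t : ℕ) : ZMod 2) ≠ ((t1 : ℕ) : ZMod 2) := by
        rw [ht1def, cast_mod_pow_eq (by norm_num) hn1]
        push_cast
        intro hcontra
        have : (1 : ZMod 2) = 0 := by linear_combination -hcontra
        exact one_ne_zero this
      rw [List.map_singleton, List.map_singleton,
        hammingL_singleton (fun hc => hne (e.injective hc))]
      omega

end memb

section ub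
variable {A : Type*} [DecidableEq A] {k n m : ℕ}

lemma gray_structure (hk : 1 ≤ k) (hm : m ∈ grayCycleSizes A k n) (hm0 : 0 < m) :
    ∃ (X : Finset (List A)) (w : ℕ → List A) (L : ℕ), X.card = m ∧ k ≤ L ∧ L ≤ n ∧
      (∀ x ∈ X, x.length = L) ∧
      (∀ i, i < m → w i ∈ X) ∧ (∀ x ∈ X, ∃ i, i < m ∧ w i = x) ∧
      (∀ i, i < m → ∀ j, j < m → w i = w j → i = j) ∧
      (∀ i, 1 ≤ i → i < m → hammingL (w (i-1)) (w i) = k) ∧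
      hammingL (w (m-1)) (w 0) = k := by
  obtain ⟨X, w, hlen, hcyc, hcard⟩ := hm
  obtain ⟨-, hmem, hsurj, hinj, hcons, hwrap⟩ := hcyc
  rw [← hcard] at hmem hsurj hinj hcons hwrap
  obtain ⟨hwrapL, hwrapH⟩ := hwrap hm0
  set L := (w 0).length with hL
  have hlens : ∀ i, i < m → (w i).length = L := by
    intro i
    induction i with
    | zero => intro _; rfl
    | succ i ih =>
      intro hi
      have := (hcons (i+1) (by omega) hi).1
      simp only [Nat.add_sub_cancel] at this
      rw [← this]
      exact ih (by omega)
  refine ⟨X, w, L, hcard.symm, ?_, ?_, ?_, hmem, hsurj, hinj,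
    fun i h1 h2 => (hcons i h1 h2).2, hwrapH⟩
  · calc k = hammingL (w (m-1)) (w 0) := hwrapH.symm
      _ ≤ (w (m-1)).length := hammingL_le _ _
      _ = L := hlens (m-1) (by omega)
  · rw [hL]
    exact hlen (w 0) (hmem 0 hm0)
  · intro x hx
    obtain ⟨i, hi, rfl⟩ := hsurj x hx
    exact hlens i hi

lemma not_one_mem (hk : 1 ≤ k) (hm : m ∈ grayCycleSizes A k n) : m ≠ 1 := by
  intro h1
  obtain ⟨X, w, L, hXc, hkL, hLn, hXlen, hmem, hsurj, hinj, hcons, hwrap⟩ :=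
    gray_structure hk hm (by omega)
  rw [h1] at hwrap
  simp only [Nat.sub_self] at hwrap
  rw [hammingL_self] at hwrap
  omega

lemma bound_pow [Fintype A] (hA : 1 ≤ Fintype.card A) (hk : 1 ≤ k)
    (hm : m ∈ grayCycleSizes A k n) : m ≤ Fintype.card A ^ n := by
  rcases Nat.eq_zero_or_pos m with h0 | h0
  · omega
  obtain ⟨X, w, L, hXc, hkL, hLn, hXlen, -, -, -, -, -⟩ := gray_structure hk hm h0
  have hne : Nonempty A := Fintype.card_pos_iff.mp (by omega)
  obtain ⟨a⟩ := hne
  have hinj : Set.InjOn (fun (x : List A) (i : Fin L) => x.getD i.1 a) X := by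
    intro x hx y hy hxy
    apply List.ext_getElem (by rw [hXlen x hx, hXlen y hy])
    intro i hix hiy
    have hiL : i < L := by rw [← hXlen x hx]; exact hix
    have := congrFun hxy ⟨i, hiL⟩
    simp only at this
    rwa [List.getD_eq_getElem _ _ hix, List.getD_eq_getElem _ _ hiy] at this
  calc m = X.card := hXc.symm
    _ ≤ (Finset.univ : Finset (Fin L → A)).card :=
        Finset.card_le_card_of_injOn _ (fun _ _ => Finset.mem_univ _) hinj
    _ = Fintype.card A ^ L := by rw [Finset.card_univ, Fintype.card_fun, Fintype.card_fin]
    _ ≤ Fintype.card A ^ n := Nat.pow_le_pow_right (by omega) hLn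

lemma differ_everywhere {u v : List A} {L : ℕ} (hu : u.length = L) (hv : v.length = L)
    (h : hammingL u v = L) (i : ℕ) (hix : i < u.length) (hiy : i < v.length) :
      u[i] ≠ v[i] := by
  have hi : i < L := by omega
  have hzlen : (u.zip v).length = L := by rw [List.length_zip]; omega
  have hall : ∀ p ∈ u.zip v, (fun q => decide (q.1 ≠ q.2)) p = true := by
    rw [← List.countP_eq_length]
    rw [List.countP_eq_length_filter, hzlen]
    exact h
  have hp := hall ((u.zip v)[i]'(by omega)) (List.getElem_mem (by omega))
  rw [List.getElem_zip] at hp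
  simpa using hp

lemma bound_two [Fintype A] (hA : Fintype.card A = 2) (hk : 1 ≤ k) (hnk : n = k)
    (hm : m ∈ grayCycleSizes A k n) : m ≤ 2 := by
  by_contra hcon
  have h3 : 3 ≤ m := by omega
  obtain ⟨X, w, L, hXc, hkL, hLn, hXlen, hmem, hsurj, hinj, hcons, hwrap⟩ :=
    gray_structure hk hm (by omega)
  have hLk : L = k := by omega
  have hL0 : (w 0).length = L := hXlen _ (hmem 0 (by omega))
  have hL1 : (w 1).length = L := hXlen _ (hmem 1 (by omega))
  have hL2 : (w 2).length = L := hXlen _ (hmem 2 (by omega))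
  have h01 : hammingL (w 0) (w 1) = L := by
    have := hcons 1 (by omega) (by omega)
    simpa [hLk] using this
  have h12 : hammingL (w 1) (w 2) = L := by
    have := hcons 2 (by omega) h3
    simpa [hLk] using this
  have hW : w 0 = w 2 := by
    apply List.ext_getElem (by omega)
    intro i hi0 hi2
    have hi1 : i < (w 1).length := by omega
    have d1 := differ_everywhere hL0 hL1 h01 i hi0 hi1
    have d2 := differ_everywhere hL1 hL2 h12 i hi1 hi2
    by_contra hne
    have hcard3 : 3 ≤ Fintype.card A := by
      have hc3 : ({(w 0)[i]'hi0, (w 1)[i]'hi1, (w 2)[i]'hi2} : Finset A).card = 3 := by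
        rw [Finset.card_insert_of_notMem (by simp [d1, hne]),
          Finset.card_insert_of_notMem (by simpa using d2)]
        simp
      have hle := (Finset.card_le_univ
        ({(w 0)[i]'hi0, (w 1)[i]'hi1, (w 2)[i]'hi2} : Finset A)).trans_eq Finset.card_univ
      omega
    omega
  have := hinj 0 (by omega) 2 (by omega) hW
  omega

end ub

section parity
variable {A : Type*} [DecidableEq A] {k n m : ℕ}

lemma zmod2_sub_eq_one : ∀ x y : ZMod 2, x ≠ y → x - y = 1 := by decide

lemma sum_map_sub (f g : A × A → ZMod 2) (l : List (A × A)) :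
    (l.map f).sum - (l.map g).sum = (l.map fun p => f p - g p).sum := by
  induction l with
  | nil => simp
  | cons p l ih =>
    simp only [List.map_cons, List.sum_cons]
    rw [← ih]
    ring

lemma sum_pair {φ : A → ZMod 2} (hφ : Function.Injective φ) (l : List (A × A)) :
    (l.map fun p => φ p.1 - φ p.2).sum
      = (l.countP fun p => decide (p.1 ≠ p.2)) • (1 : ZMod 2) := by
  induction l with
  | nil => simp
  | cons p l ih =>
    simp only [List.map_cons, List.sum_cons, List.countP_cons]
    by_cases hp : p.1 = p.2
    · rw [hp, sub_self, ih]
      simp [hp]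
    · rw [zmod2_sub_eq_one _ _ (fun hc => hp (hφ hc)), ih]
      have hd : (decide (p.1 ≠ p.2)) = true := by simp [hp]
      rw [hd]
      simp only [if_true]
      rw [add_nsmul, one_nsmul]
      ring

lemma par_step {φ : A → ZMod 2} (hφ : Function.Injective φ) {u v : List A}
    (hlen : u.length = v.length) (hham : hammingL u v = k) (hke : Even k) :
    (u.map φ).sum = (v.map φ).sum := by
  have hu : u.map φ = (u.zip v).map (fun p => φ p.1) := by
    conv_lhs => rw [← List.map_fst_zip (l₁ := u) (l₂ := v) (by omega)]
    rw [List.map_map]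
    rfl
  have hv : v.map φ = (u.zip v).map (fun p => φ p.2) := by
    conv_lhs => rw [← List.map_snd_zip (l₁ := u) (l₂ := v) (by omega)]
    rw [List.map_map]
    rfl
  have hsub : (u.map φ).sum - (v.map φ).sum = 0 := by
    rw [hu, hv, sum_map_sub, sum_pair hφ, List.countP_eq_length_filter]
    have : ((u.zip v).filter fun p => decide (p.1 ≠ p.2)).length = k := hham
    rw [this]
    obtain ⟨c, hc⟩ := hke
    have : c + c = 2 * c := by ring
    rw [hc, this, mul_nsmul]
    have h2 : (2 : ℕ) • (1 : ZMod 2) = 0 := by decide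
    rw [h2, smul_zero]
  exact sub_eq_zero.mp hsub
end parity

section half
variable {A : Type*} [DecidableEq A] [Fintype A] {k n m : ℕ}

lemma bound_half (hA : Fintype.card A = 2) (hk : 1 ≤ k) (hke : Even k) (hkn : k ≤ n)
    (hm : m ∈ grayCycleSizes A k n) : m ≤ 2 ^ (n-1) := by
  rcases Nat.eq_zero_or_pos m with h0 | h0
  · rw [h0]
    exact Nat.zero_le _
  obtain ⟨X, w, L, hXc, hkL, hLn, hXlen, hmem, hsurj, hinj, hcons, hwrap⟩ :=
    gray_structure hk hm h0
  obtain e := (Fintype.equivOfCardEq (α := A) (β := ZMod 2) (by rw [hA, ZMod.card]))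
  set par : List A → ZMod 2 := fun x => (x.map e).sum with hpardef
  have hL1 : 1 ≤ L := by omega
  have hpari : ∀ i, i < m → par (w i) = par (w 0) := by
    intro i
    induction i with
    | zero => intro _; rfl
    | succ i ih =>
      intro hi
      have hstep := hcons (i+1) (by omega) hi
      simp only [Nat.add_sub_cancel] at hstep
      have hli : (w i).length = L := hXlen _ (hmem i (by omega))
      have hli1 : (w (i+1)).length = L := hXlen _ (hmem (i+1) hi)
      have := par_step e.injective (u := w i) (v := w (i+1)) (by omega) hstep hke
      rw [hpardef]
      simp only
      rw [← this]
      exact ih (by omega)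
  have hparX : ∀ x ∈ X, par x = par (w 0) := by
    intro x hx
    obtain ⟨i, hi, rfl⟩ := hsurj x hx
    exact hpari i hi
  have hne : Nonempty A := Fintype.card_pos_iff.mp (by omega)
  obtain ⟨a⟩ := hne
  have hinj2 : Set.InjOn (fun (x : List A) (i : Fin (L-1)) => x.getD i.1 a) X := by
    intro x hx y hy hxy
    have hlx : x.length = L := hXlen x hx
    have hly : y.length = L := hXlen y hy
    have htake : x.take (L-1) = y.take (L-1) := by
      apply List.ext_getElem
      · rw [List.length_take, List.length_take, hlx, hly]
      · intro i hix hiy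
        have hiL : i < L - 1 := by
          rw [List.length_take] at hix
          omega
        have := congrFun hxy ⟨i, hiL⟩
        simp only at this
        rw [List.getElem_take, List.getElem_take]
        rwa [List.getD_eq_getElem _ _ (by omega), List.getD_eq_getElem _ _ (by omega)] at this
    have hdx : (x.drop (L-1)).length = 1 := by rw [List.length_drop]; omega
    have hdy : (y.drop (L-1)).length = 1 := by rw [List.length_drop]; omega
    obtain ⟨c, hc⟩ := List.length_eq_one_iff.mp hdx
    obtain ⟨d, hd⟩ := List.length_eq_one_iff.mp hdy
    have hx2 : x = x.take (L-1) ++ [c] := by rw [← hc, List.take_append_drop]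
    have hy2 : y = y.take (L-1) ++ [d] := by rw [← hd, List.take_append_drop]
    have hpar : par x = par y := by rw [hparX x hx, hparX y hy]
    rw [hx2, hy2, htake] at hpar
    have hcd : c = d := by
      rw [hpardef] at hpar
      simp only [List.map_append, List.sum_append, List.map_singleton,
        List.sum_singleton] at hpar
      have : e c = e d := by
        have := add_left_cancel hpar
        exact this
      exact e.injective this
    rw [hx2, hy2, htake, hcd]
  calc m = X.card := hXc.symm
    _ ≤ (Finset.univ : Finset (Fin (L-1) → A)).card :=
        Finset.card_le_card_of_injOn _ (fun _ _ => Finset.mem_univ _) hinj2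
    _ = Fintype.card A ^ (L-1) := by
        rw [Finset.card_univ, Fintype.card_fun, Fintype.card_fin]
    _ ≤ 2 ^ (n-1) := by
        rw [hA]
        exact Nat.pow_le_pow_right (by omega) (by omega)

end half


/-- For a finite alphabet `A` with `|A| ≥ 2`, `k ≥ 1`, and `n ≥ k`, the largest
cardinality `λ_{A,σ_k}(n)` of a set of words of length at most `n` over `A` admitting a
`σ_k`-Gray cycle is: `|A|^n` if `|A| ≥ 3`; `2` if `|A| = 2` and `n = k`; `2^n` if
`|A| = 2`, `n ≥ k + 1`, and `k` is odd; and `2^{n-1}` if `|A| = 2`, `n ≥ k + 1`, and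
`k` is even. -/
theorem statement18 (A : Type*) [Fintype A] [DecidableEq A]
    (hA : 2 ≤ Fintype.card A) (k n : ℕ) (hk : 1 ≤ k) (hn : k ≤ n) :
    (3 ≤ Fintype.card A →
      IsGreatest (grayCycleSizes A k n) (Fintype.card A ^ n)) ∧
    (Fintype.card A = 2 → n = k →
      IsGreatest (grayCycleSizes A k n) 2) ∧
    (Fintype.card A = 2 → k + 1 ≤ n → Odd k →
      IsGreatest (grayCycleSizes A k n) (2 ^ n)) ∧
    (Fintype.card A = 2 → k + 1 ≤ n → Even k →
      IsGreatest (grayCycleSizes A k n) (2 ^ (n - 1))) := by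
  have h1 : 1 ≤ Fintype.card A := by omega
  refine ⟨?_, ?_, ?_, ?_⟩
  · intro h3
    exact ⟨memA h3 hk hn, fun m hm => bound_pow h1 hk hm⟩
  · intro h2 hnk
    constructor
    · obtain ⟨a, b, hab⟩ := Fintype.exists_pair_of_one_lt_card (α := A) (by omega)
      exact mem_two hk hn hab
    · intro m hm
      exact bound_two h2 hk hnk hm
  · intro h2 hkn1 hko
    refine ⟨memC h2 hk hko hkn1, fun m hm => ?_⟩
    have := bound_pow h1 hk hm
    rwa [h2] at this
  · intro h2 hkn1 hke
    exact ⟨memD h2 hk hke hkn1, fun m hm => bound_half h2 hk hke hn hm⟩
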